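/- Let n, m be coprime positive integers, α ∈ ℂ^m, β ∈ ℂ^n. Then the mn-tuple of products (α_k β_ℓ)_{1≤k≤m, 1≤ℓ≤n} satisfies D((α_k β_ℓ)) ≤ (1 + D(α))(1 + D(β)) − 1. -/

import Mathlib

/-- `ζ_d = exp(2πi/d)`. -/
noncomputable def zetad (d : ℕ) : ℂ := Complex.exp (2 * Real.pi * Complex.I / d)

/-- The finite discrepancy `D(ξ) = inf_{|u|=1} max_j min_i |ξ_i − u ζ_d^j|`. -/
noncomputable def Disc {d : ℕ} (ξ : Fin d → ℂ) : ℝ :=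
  sInf {t : ℝ | ∃ u : ℂ, ‖u‖ = 1 ∧
    t = ⨆ j : Fin d, ⨅ i : Fin d, ‖ξ i - u * zetad d ^ ((j : ℕ) + 1)‖}

lemma abs_zetad (d : ℕ) : ‖zetad d‖ = 1 := by
  have h : (2 * (Real.pi : ℂ) * Complex.I / d) = ((2 * Real.pi / d : ℝ) : ℂ) * Complex.I := by
    push_cast; ring
  rw [zetad, h, Complex.norm_exp_ofReal_mul_I]

lemma zetad_pow_self {d : ℕ} (hd : 0 < d) : zetad d ^ d = 1 := by
  have hd' : (d : ℂ) ≠ 0 := Nat.cast_ne_zero.2 hd.ne'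
  rw [zetad, ← Complex.exp_nat_mul]
  have h : (d : ℂ) * (2 * Real.pi * Complex.I / d) = 2 * Real.pi * Complex.I := by
    field_simp
  rw [h, Complex.exp_two_pi_mul_I]

lemma zetad_pow_congr {d : ℕ} (hd : 0 < d) {e e' : ℕ} (h : e ≡ e' [MOD d]) :
    zetad d ^ e = zetad d ^ e' := by
  have key : ∀ a : ℕ, zetad d ^ a = zetad d ^ (a % d) := by
    intro a
    conv_lhs => rw [← Nat.mod_add_div a d]
    rw [pow_add, pow_mul, zetad_pow_self hd, one_pow, mul_one]
  rw [key e, key e']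
  exact congrArg _ h

lemma zetad_mul_pow {m n : ℕ} (hm : 0 < m) (hn : 0 < n) : zetad (m * n) ^ n = zetad m := by
  have hm' : (m : ℂ) ≠ 0 := Nat.cast_ne_zero.2 hm.ne'
  have hn' : (n : ℂ) ≠ 0 := Nat.cast_ne_zero.2 hn.ne'
  rw [zetad, zetad, ← Complex.exp_nat_mul]
  congr 1
  push_cast
  field_simp

lemma exists_inv_mul {m n : ℕ} (hm : 0 < m) (hcop : Nat.Coprime n m) (c : ℕ) :
    ∃ k : ℕ, k * n ≡ c [MOD m] := by
  haveI : NeZero m := ⟨hm.ne'⟩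
  refine ⟨((c : ZMod m) * (n : ZMod m)⁻¹).val, ?_⟩
  have h1 : ((((c : ZMod m) * (n : ZMod m)⁻¹).val : ℕ) : ZMod m)
      = (c : ZMod m) * (n : ZMod m)⁻¹ := ZMod.natCast_zmod_val _
  have h2 : (n : ZMod m) * (n : ZMod m)⁻¹ = 1 := ZMod.coe_mul_inv_eq_one n hcop
  have : ((((c : ZMod m) * (n : ZMod m)⁻¹).val * n : ℕ) : ZMod m) = ((c : ℕ) : ZMod m) := by
    push_cast
    rw [h1, mul_assoc, mul_comm ((n : ZMod m)⁻¹) (n : ZMod m), h2, mul_one]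
  exact (ZMod.natCast_eq_natCast_iff _ _ _).mp this

lemma discSet_nonneg {d : ℕ} (ξ : Fin d → ℂ) {t : ℝ}
    (ht : ∃ u : ℂ, ‖u‖ = 1 ∧
      t = ⨆ j : Fin d, ⨅ i : Fin d, ‖ξ i - u * zetad d ^ ((j : ℕ) + 1)‖) :
    0 ≤ t := by
  obtain ⟨u, _, rfl⟩ := ht
  rcases Nat.eq_zero_or_pos d with rfl | hd
  · simp [iSup, Real.sSup_empty, Set.range_eq_empty]
  · haveI : Nonempty (Fin d) := ⟨⟨0, hd⟩⟩
    refine le_ciSup_of_le (Set.Finite.bddAbove (Set.finite_range _)) ⟨0, hd⟩ ?_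
    exact le_ciInf fun i => norm_nonneg _

lemma disc_le {d : ℕ} (ξ : Fin d → ℂ) (u : ℂ) (hu : ‖u‖ = 1) :
    Disc ξ ≤ ⨆ j : Fin d, ⨅ i : Fin d, ‖ξ i - u * zetad d ^ ((j : ℕ) + 1)‖ := by
  refine csInf_le ⟨0, fun t ht => discSet_nonneg ξ ht⟩ ⟨u, hu, rfl⟩

lemma disc_nonneg {d : ℕ} (ξ : Fin d → ℂ) : 0 ≤ Disc ξ :=
  Real.sInf_nonneg fun _ ht => discSet_nonneg ξ ht

/-- For coprime `m, n`, the `mn`-tuple of products `α_k β_ℓ` satisfies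
`D((α_k β_ℓ)) ≤ (1 + D(α))(1 + D(β)) − 1`. -/
theorem stmt7 (m n : ℕ) (hm : 0 < m) (hn : 0 < n) (hcop : Nat.Coprime m n)
    (α : Fin m → ℂ) (β : Fin n → ℂ) :
    Disc (fun i : Fin (m * n) =>
        α (finProdFinEquiv.symm i).1 * β (finProdFinEquiv.symm i).2) ≤
      (1 + Disc α) * (1 + Disc β) - 1 := by
  set ξ : Fin (m * n) → ℂ := fun i =>
    α (finProdFinEquiv.symm i).1 * β (finProdFinEquiv.symm i).2 with hξ
  haveI : Nonempty (Fin m) := ⟨⟨0, hm⟩⟩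
  haveI : Nonempty (Fin n) := ⟨⟨0, hn⟩⟩
  haveI : Nonempty (Fin (m * n)) := ⟨⟨0, Nat.mul_pos hm hn⟩⟩
  -- key: for any unit uα, uβ
  have key : ∀ uα uβ : ℂ, ‖uα‖ = 1 → ‖uβ‖ = 1 →
      ∀ vα vβ : ℝ,
      vα = (⨆ j : Fin m, ⨅ i : Fin m, ‖α i - uα * zetad m ^ ((j : ℕ) + 1)‖) →
      vβ = (⨆ j : Fin n, ⨅ i : Fin n, ‖β i - uβ * zetad n ^ ((j : ℕ) + 1)‖) →
      Disc ξ ≤ vα + vβ + vα * vβ := by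
    intro uα uβ huα huβ vα vβ hvα hvβ
    have habs : ‖uα * uβ‖ = 1 := by rw [norm_mul, huα, huβ, one_mul]
    refine (disc_le ξ (uα * uβ) habs).trans ?_
    refine ciSup_le fun j => ?_
    -- find exponents
    obtain ⟨k, hk⟩ := exists_inv_mul hm hcop.symm ((j : ℕ) + 1)
    obtain ⟨l, hl⟩ := exists_inv_mul hn hcop ((j : ℕ) + 1)
    set a : Fin m := ⟨(k + m - 1) % m, Nat.mod_lt _ hm⟩ with ha
    set b : Fin n := ⟨(l + n - 1) % n, Nat.mod_lt _ hn⟩ with hb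
    have hak : (a : ℕ) + 1 ≡ k [MOD m] := by
      have h1 : (k + m - 1) % m + 1 ≡ (k + m - 1) + 1 [MOD m] :=
        Nat.ModEq.add_right 1 (Nat.mod_modEq _ _)
      have h2 : k + m - 1 + 1 = k + m := Nat.sub_add_cancel (by omega)
      have h3 : k + m ≡ k [MOD m] := Nat.add_mod_right k m
      calc (a : ℕ) + 1 ≡ (k + m - 1) + 1 [MOD m] := h1
        _ = k + m := h2
        _ ≡ k [MOD m] := h3
    have hbl : (b : ℕ) + 1 ≡ l [MOD n] := by
      have h1 : (l + n - 1) % n + 1 ≡ (l + n - 1) + 1 [MOD n] :=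
        Nat.ModEq.add_right 1 (Nat.mod_modEq _ _)
      have h2 : l + n - 1 + 1 = l + n := Nat.sub_add_cancel (by omega)
      have h3 : l + n ≡ l [MOD n] := Nat.add_mod_right l n
      calc (b : ℕ) + 1 ≡ (l + n - 1) + 1 [MOD n] := h1
        _ = l + n := h2
        _ ≡ l [MOD n] := h3
    -- the root of unity decomposition
    have hzeta : zetad (m * n) ^ ((j : ℕ) + 1)
        = zetad m ^ ((a : ℕ) + 1) * zetad n ^ ((b : ℕ) + 1) := by
      have hmn : 0 < m * n := Nat.mul_pos hm hn
      have hcong : (j : ℕ) + 1 ≡ k * n + l * m [MOD m * n] := by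
        refine (Nat.modEq_and_modEq_iff_modEq_mul hcop).mp ⟨?_, ?_⟩
        · have h0 : l * m ≡ 0 [MOD m] := (Nat.modEq_zero_iff_dvd).mpr ⟨l, mul_comm l m⟩
          calc (j : ℕ) + 1 ≡ k * n [MOD m] := hk.symm
            _ = k * n + 0 := by ring
            _ ≡ k * n + l * m [MOD m] := Nat.ModEq.add_left _ h0.symm
        · have h0 : k * n ≡ 0 [MOD n] := (Nat.modEq_zero_iff_dvd).mpr ⟨k, mul_comm k n⟩
          calc (j : ℕ) + 1 ≡ l * m [MOD n] := hl.symm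
            _ = 0 + l * m := by ring
            _ ≡ k * n + l * m [MOD n] := Nat.ModEq.add_right _ h0.symm
      rw [zetad_pow_congr hmn hcong, pow_add, mul_comm k n, mul_comm l m,
        pow_mul, pow_mul, zetad_mul_pow hm hn, mul_comm m n, zetad_mul_pow hn hm,
        zetad_pow_congr hm hak, zetad_pow_congr hn hbl]
    -- pick minimizers
    obtain ⟨x₀, hx₀⟩ := Finite.exists_min fun i : Fin m =>
      ‖α i - uα * zetad m ^ ((a : ℕ) + 1)‖
    obtain ⟨y₀, hy₀⟩ := Finite.exists_min fun i : Fin n =>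
      ‖β i - uβ * zetad n ^ ((b : ℕ) + 1)‖
    set A := ‖α x₀ - uα * zetad m ^ ((a : ℕ) + 1)‖ with hA
    set B := ‖β y₀ - uβ * zetad n ^ ((b : ℕ) + 1)‖ with hB
    have hAv : A ≤ vα := by
      rw [hvα]
      refine le_trans (le_ciInf hx₀) ?_
      exact le_ciSup_of_le (Set.Finite.bddAbove (Set.finite_range _)) a le_rfl
    have hBv : B ≤ vβ := by
      rw [hvβ]
      refine le_trans (le_ciInf hy₀) ?_
      exact le_ciSup_of_le (Set.Finite.bddAbove (Set.finite_range _)) b le_rfl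
    have hA0 : 0 ≤ A := norm_nonneg _
    have hB0 : 0 ≤ B := norm_nonneg _
    -- bound the inf by the value at the product index
    set i₀ : Fin (m * n) := finProdFinEquiv (x₀, y₀) with hi₀
    have hinf : (⨅ i : Fin (m * n),
        ‖ξ i - uα * uβ * zetad (m * n) ^ ((j : ℕ) + 1)‖)
        ≤ ‖ξ i₀ - uα * uβ * zetad (m * n) ^ ((j : ℕ) + 1)‖ :=
      ciInf_le (Set.Finite.bddBelow (Set.finite_range _)) i₀
    have hval : ‖ξ i₀ - uα * uβ * zetad (m * n) ^ ((j : ℕ) + 1)‖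
        ≤ A * (B + 1) + B := by
      have hξi : ξ i₀ = α x₀ * β y₀ := by
        simp only [hξ, hi₀, Equiv.symm_apply_apply]
      rw [hξi, hzeta]
      have hdecomp : α x₀ * β y₀ - uα * uβ * (zetad m ^ ((a : ℕ) + 1) * zetad n ^ ((b : ℕ) + 1))
          = (α x₀ - uα * zetad m ^ ((a : ℕ) + 1)) * β y₀
            + (uα * zetad m ^ ((a : ℕ) + 1)) * (β y₀ - uβ * zetad n ^ ((b : ℕ) + 1)) := by
        ring
      rw [hdecomp]
      have habsy : ‖β y₀‖ ≤ B + 1 := by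
        calc ‖β y₀‖
            ≤ ‖β y₀ - uβ * zetad n ^ ((b : ℕ) + 1)‖
              + ‖uβ * zetad n ^ ((b : ℕ) + 1)‖ := by
              simpa using norm_add_le (β y₀ - uβ * zetad n ^ ((b : ℕ) + 1))
                (uβ * zetad n ^ ((b : ℕ) + 1))
          _ = B + 1 := by
              rw [← hB, norm_mul, huβ, norm_pow, abs_zetad, one_pow, one_mul]
      calc ‖(α x₀ - uα * zetad m ^ ((a : ℕ) + 1)) * β y₀
            + (uα * zetad m ^ ((a : ℕ) + 1)) * (β y₀ - uβ * zetad n ^ ((b : ℕ) + 1))‖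
          ≤ ‖(α x₀ - uα * zetad m ^ ((a : ℕ) + 1)) * β y₀‖
            + ‖(uα * zetad m ^ ((a : ℕ) + 1)) * (β y₀ - uβ * zetad n ^ ((b : ℕ) + 1))‖ :=
            norm_add_le _ _
        _ = A * ‖β y₀‖ + 1 * B := by
            rw [norm_mul, norm_mul, ← hA, ← hB, norm_mul, huα, norm_pow, abs_zetad, one_pow, mul_one]
        _ ≤ A * (B + 1) + 1 * B := by
            have := mul_le_mul_of_nonneg_left habsy hA0
            linarith
        _ = A * (B + 1) + B := by ring
    refine hinf.trans (hval.trans ?_)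
    nlinarith [mul_le_mul hAv hBv hB0 (le_trans hA0 hAv)]
  -- now the epsilon argument
  have step : ∀ ε : ℝ, 0 < ε →
      Disc ξ ≤ (1 + Disc α + ε) * (1 + Disc β + ε) - 1 := by
    intro ε hε
    have hneα : Set.Nonempty {t : ℝ | ∃ u : ℂ, ‖u‖ = 1 ∧
        t = ⨆ j : Fin m, ⨅ i : Fin m, ‖α i - u * zetad m ^ ((j : ℕ) + 1)‖} :=
      ⟨_, 1, by simp, rfl⟩
    have hneβ : Set.Nonempty {t : ℝ | ∃ u : ℂ, ‖u‖ = 1 ∧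
        t = ⨆ j : Fin n, ⨅ i : Fin n, ‖β i - u * zetad n ^ ((j : ℕ) + 1)‖} :=
      ⟨_, 1, by simp, rfl⟩
    have hSα := Real.lt_sInf_add_pos hneα hε
    have hSβ := Real.lt_sInf_add_pos hneβ hε
    obtain ⟨tα, ⟨uα, huα, htα⟩, htαlt⟩ := hSα
    obtain ⟨tβ, ⟨uβ, huβ, htβ⟩, htβlt⟩ := hSβ
    have h1 := key uα uβ huα huβ tα tβ htα htβ
    have htαlt' : tα < Disc α + ε := by unfold Disc; exact htαlt
    have htβlt' : tβ < Disc β + ε := by unfold Disc; exact htβlt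
    have htα0 : 0 ≤ tα := discSet_nonneg α ⟨uα, huα, htα⟩
    have htβ0 : 0 ≤ tβ := discSet_nonneg β ⟨uβ, huβ, htβ⟩
    have hDα : 0 ≤ Disc α := disc_nonneg α
    have hDβ : 0 ≤ Disc β := disc_nonneg β
    nlinarith [mul_le_mul htαlt'.le htβlt'.le htβ0 (by linarith : (0:ℝ) ≤ Disc α + ε)]
  -- pass to the limit
  have cont : Filter.Tendsto (fun ε : ℝ => (1 + Disc α + ε) * (1 + Disc β + ε) - 1)
      (nhdsWithin 0 (Set.Ioi 0)) (nhds ((1 + Disc α) * (1 + Disc β) - 1)) := by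
    have hc : Continuous fun ε : ℝ => (1 + Disc α + ε) * (1 + Disc β + ε) - 1 := by
      continuity
    have := (hc.tendsto 0).mono_left (nhdsWithin_le_nhds (s := Set.Ioi 0))
    simpa using this
  exact ge_of_tendsto cont (eventually_nhdsWithin_of_forall fun ε hε => step ε hε)
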